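/- For odd n and a generic fixed parameter α ∈ F_q with α ≠ 0 and α ≠ (-1)^{(n+1)/2}, the number of F_q-points of the variety with equations x_1 x_1' = 1 + α x_2, x_i x_i' = 1 + x_{i-1}x_{i+1} (1 < i < n), x_n x_n' = 1 + x_{n-1} equals (q^{(n+1)/2} - 1)(q^{(n+3)/2} - 1)/(q^2 - 1). -/

import Mathlib

open scoped Classical
section TypeA
variable {F : Type} [Field F] [Fintype F]

def nbrProd {k : ℕ} (x : Fin k → F) (i : Fin k) : F :=
  (if h : 0 < i.1 then x ⟨i.1 - 1, lt_of_le_of_lt (Nat.sub_le _ _) i.2⟩ else 1) *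
  (if h : i.1 + 1 < k then x ⟨i.1 + 1, h⟩ else 1)

def EqnA (k : ℕ) (β : F) (p : (Fin k → F) × (Fin k → F)) : Prop :=
  ∀ i : Fin k, p.1 i * p.2 i = 1 + (if i.1 = 0 then β else 1) * nbrProd p.1 i

lemma prod_nbr_eq {k : ℕ} (x : Fin k → F) (i : Fin k) :
    ∏ j ∈ Finset.univ.filter (fun j => (SimpleGraph.pathGraph k).Adj i j), x j
      = nbrProd x i := by
  have hfil : Finset.univ.filter (fun j => (SimpleGraph.pathGraph k).Adj i j)
      = Finset.univ.filter (fun j : Fin k => j.1 + 1 = i.1)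
        ∪ Finset.univ.filter (fun j : Fin k => i.1 + 1 = j.1) := by
    rw [← Finset.filter_or]
    apply Finset.filter_congr
    intro j _
    rw [SimpleGraph.pathGraph_adj]
    tauto
  rw [hfil, Finset.prod_union]
  · have h1 : Finset.univ.filter (fun j : Fin k => j.1 + 1 = i.1)
        = if h : 0 < i.1 then {(⟨i.1 - 1, lt_of_le_of_lt (Nat.sub_le _ _) i.2⟩ : Fin k)} else ∅ := by
      split_ifs with h
      · ext j
        simp only [Finset.mem_filter, Finset.mem_univ, true_and, Finset.mem_singleton, Fin.ext_iff]
        omega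
      · ext j
        simp only [Finset.mem_filter, Finset.mem_univ, true_and, Finset.notMem_empty, iff_false]
        omega
    have h2 : Finset.univ.filter (fun j : Fin k => i.1 + 1 = j.1)
        = if h : i.1 + 1 < k then {(⟨i.1 + 1, h⟩ : Fin k)} else ∅ := by
      split_ifs with h
      · ext j
        simp only [Finset.mem_filter, Finset.mem_univ, true_and, Finset.mem_singleton, Fin.ext_iff]
        omega
      · ext j
        simp only [Finset.mem_filter, Finset.mem_univ, true_and, Finset.notMem_empty, iff_false]
        have := j.2
        omega
    rw [h1, h2, nbrProd]
    split_ifs <;> simp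
  · rw [Finset.disjoint_left]
    intro j hj hj'
    simp only [Finset.mem_filter, Finset.mem_univ, true_and] at hj hj'
    omega


lemma nbrProd_succ {k : ℕ} (x : Fin (k+1) → F) (i : Fin k) :
    nbrProd x i.succ = x i.castSucc * (if h : i.1 + 1 < k then x ⟨i.1 + 2, by omega⟩ else 1) := by
  simp only [nbrProd, Fin.val_succ]
  congr 1
  · by_cases h : i.1 + 1 < k
    · rw [dif_pos (by omega), dif_pos h]
    · rw [dif_neg (by omega), dif_neg h]

lemma nbrProd_tail {k : ℕ} (x : Fin (k+1) → F) (i : Fin k) :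
    nbrProd (Fin.tail x) i =
      (if 0 < i.1 then x i.castSucc else 1) *
      (if h : i.1 + 1 < k then x ⟨i.1 + 2, by omega⟩ else 1) := by
  simp only [nbrProd, Fin.tail]
  congr 1
  · by_cases h : 0 < i.1
    · rw [dif_pos h, if_pos h]
      exact congrArg x (Fin.ext (by simp; omega))
    · rw [dif_neg h, if_neg h]

lemma nbrProd_zero {k : ℕ} (x : Fin (k+2) → F) : nbrProd x (0 : Fin (k+2)) = x 1 := by
  simp only [nbrProd]
  rw [dif_neg (by simp), dif_pos (by simp), one_mul]
  congr 1

lemma eqnA_cons_iff (k : ℕ) (β : F) (x y : Fin (k+1) → F) :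
    EqnA (k+1) β (x, y) ↔
      (x 0 * y 0 = 1 + β * nbrProd x 0) ∧ EqnA k (x 0) (Fin.tail x, Fin.tail y) := by
  rw [EqnA, Fin.forall_fin_succ]
  apply and_congr
  · simp only [Fin.val_zero, if_true]
  · rw [EqnA]
    apply forall_congr'
    intro i
    simp only [Fin.val_succ, Nat.add_one_ne_zero, if_false, one_mul, nbrProd_succ,
      nbrProd_tail, Fin.tail]
    rcases Nat.eq_zero_or_pos i.1 with h | h
    · have hi : i.castSucc = 0 := Fin.ext (by simpa using h)
      rw [if_pos h, if_neg (by omega), hi, one_mul]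
    · rw [if_neg (by omega), if_pos h, one_mul]

lemma tail_zero {k : ℕ} (x : Fin (k+2) → F) : Fin.tail x 0 = x 1 := by
  rw [Fin.tail]
  congr 1

lemma eqnA_ne_iff (k : ℕ) (β t : F) (ht : t ≠ 0) (x y : Fin (k+1) → F) (h0 : x 0 = t) :
    EqnA (k+1) β (x, y) ↔
      y 0 = t⁻¹ * (1 + β * nbrProd x 0) ∧ EqnA k t (Fin.tail x, Fin.tail y) := by
  rw [eqnA_cons_iff, h0]
  apply and_congr_left'
  constructor
  · intro h
    rw [← h, inv_mul_cancel_left₀ ht]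
  · intro h
    rw [h, mul_inv_cancel_left₀ ht]

lemma eqnA_zero_iff (k : ℕ) (β : F) (hβ : β ≠ 0) (x y : Fin (k+2) → F) (h0 : x 0 = 0) :
    EqnA (k+2) β (x, y) ↔
      x 1 = -β⁻¹ ∧ y 1 = -β ∧
        EqnA k (-β⁻¹) (Fin.tail (Fin.tail x), Fin.tail (Fin.tail y)) := by
  rw [eqnA_cons_iff, eqnA_cons_iff, h0, zero_mul, zero_mul, add_zero, nbrProd_zero,
    tail_zero, tail_zero]
  constructor
  · rintro ⟨a, b, c⟩
    have hx : x 1 = -β⁻¹ := by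
      field_simp
      linear_combination -a
    rw [hx] at b c
    have hy : y 1 = -β := by
      have h2 : (-β) * ((-β⁻¹) * y 1) = -β * 1 := by rw [b]
      rwa [← mul_assoc, neg_mul_neg, mul_inv_cancel₀ hβ, one_mul, mul_one] at h2
    exact ⟨hx, hy, c⟩
  · rintro ⟨a, b, c⟩
    refine ⟨?_, ?_, ?_⟩
    · rw [a, mul_neg, mul_inv_cancel₀ hβ]
      ring
    · rw [a, b, neg_mul_neg, inv_mul_cancel₀ hβ]
    · rw [a]
      exact c

noncomputable def cntA (k : ℕ) (β : F) : ℕ :=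
  Nat.card {p : (Fin k → F) × (Fin k → F) // EqnA k β p}

lemma cntA_zero (β : F) : cntA 0 β = 1 := by
  rw [cntA, Nat.card_congr (Equiv.subtypeUnivEquiv (fun p => by intro i; exact i.elim0))]
  simp [Nat.card_eq_fintype_card]

lemma card_mul_eq (c : F) :
    Nat.card {z : F × F // z.1 * z.2 = c} = if c = 0 then 2 * Fintype.card F - 1 else Fintype.card F - 1 := by
  split_ifs with hc
  · subst hc
    rw [Nat.card_eq_fintype_card, Fintype.card_subtype]
    have : (Finset.univ.filter (fun z : F × F => z.1 * z.2 = 0))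
        = Finset.univ.filter (fun z : F × F => z.1 = 0) ∪ Finset.univ.filter (fun z : F × F => z.2 = 0) := by
      rw [← Finset.filter_or]; apply Finset.filter_congr; intro z _; simp [mul_eq_zero]
    rw [this]
    have h1 : (Finset.univ.filter (fun z : F × F => z.1 = 0)) = {(0 : F)} ×ˢ Finset.univ := by
      ext z; simp [eq_comm, Prod.ext_iff, And.comm]
    have h2 : (Finset.univ.filter (fun z : F × F => z.2 = 0)) = Finset.univ ×ˢ {(0 : F)} := by
      ext z; simp [eq_comm, Prod.ext_iff, And.comm]
    have h3 : (Finset.univ.filter (fun z : F × F => z.1 = 0)) ∩ (Finset.univ.filter (fun z : F × F => z.2 = 0)) = {((0 : F), (0 : F))} := by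
      ext z; simp [Prod.ext_iff, Finset.mem_filter]
    have c1 : (Finset.univ.filter (fun z : F × F => z.1 = 0)).card = Fintype.card F := by
      rw [h1]; simp
    have c2 : (Finset.univ.filter (fun z : F × F => z.2 = 0)).card = Fintype.card F := by
      rw [h2]; simp
    have := Finset.card_union_add_card_inter (Finset.univ.filter (fun z : F × F => z.1 = 0))
      (Finset.univ.filter (fun z : F × F => z.2 = 0))
    rw [h3, Finset.card_singleton, c1, c2] at this
    omega
  · have e : {z : F × F // z.1 * z.2 = c} ≃ {a : F // a ≠ 0} := by
      refine ⟨fun z => ⟨z.1.1, ?_⟩, fun a => ⟨(a.1, a.1⁻¹ * c), ?_⟩, ?_, ?_⟩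
      · intro h; apply hc; rw [← z.2, h, zero_mul]
      · rw [← mul_assoc, mul_inv_cancel₀ a.2, one_mul]
      · rintro ⟨⟨x, y⟩, hz⟩
        have hx : x ≠ 0 := by intro h; apply hc; rw [← hz, h, zero_mul]
        simp only [Subtype.mk.injEq, Prod.mk.injEq, true_and]
        rw [← hz, ← mul_assoc, inv_mul_cancel₀ hx, one_mul]
      · intro a; rfl
    rw [Nat.card_congr e, Nat.card_congr unitsEquivNeZero.symm, Nat.card_units, Nat.card_eq_fintype_card]

lemma cntA_one (β : F) :
    cntA 1 β = if β = -1 then 2 * Fintype.card F - 1 else Fintype.card F - 1 := by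
  have e : {p : (Fin 1 → F) × (Fin 1 → F) // EqnA 1 β p} ≃ {z : F × F // z.1 * z.2 = 1 + β} := by
    refine ⟨fun p => ⟨(p.1.1 0, p.1.2 0), ?_⟩, fun z => ⟨(fun _ => z.1.1, fun _ => z.1.2), ?_⟩, ?_, ?_⟩
    · have := p.2 0
      simpa [EqnA, nbrProd] using this
    · intro i
      have : i = 0 := Subsingleton.elim _ _
      subst this
      simpa [EqnA, nbrProd] using z.2
    · rintro ⟨⟨x, y⟩, hp⟩
      simp only [Subtype.mk.injEq, Prod.mk.injEq]
      refine Subtype.ext (Prod.ext ?_ ?_) <;> (funext i; rw [Subsingleton.elim i 0])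
    · intro z; rfl
  rw [cntA, Nat.card_congr e, card_mul_eq]
  congr 1
  simp only [eq_iff_iff]
  constructor
  · intro h; linear_combination h
  · intro h; rw [h]; ring

lemma fiber_ne (k : ℕ) (β t : F) (ht : t ≠ 0) :
    Nat.card {p : (Fin (k+1) → F) × (Fin (k+1) → F) // EqnA (k+1) β p ∧ p.1 0 = t}
      = cntA k t := by
  apply Nat.card_congr
  refine ⟨fun s => ⟨(Fin.tail s.1.1, Fin.tail s.1.2),
      ((eqnA_ne_iff k β t ht s.1.1 s.1.2 s.2.2).mp s.2.1).2⟩,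
    fun w => ⟨(Fin.cons t w.1.1,
      Fin.cons (t⁻¹ * (1 + β * nbrProd (Fin.cons t w.1.1) 0)) w.1.2), ?_, ?_⟩, ?_, ?_⟩
  · refine (eqnA_ne_iff k β t ht _ _ (by simp)).mpr ⟨?_, ?_⟩
    · simp
    · simp only [Fin.tail_cons]
      exact w.2
  · simp
  · rintro ⟨⟨x, y⟩, hE, h0⟩
    apply Subtype.ext
    have hx : Fin.cons t (Fin.tail x) = x := by rw [← h0]; exact Fin.cons_self_tail x
    have hy0 : y 0 = t⁻¹ * (1 + β * nbrProd x 0) := ((eqnA_ne_iff k β t ht x y h0).mp hE).1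
    simp only [hx]
    rw [← hy0, Fin.cons_self_tail]
  · rintro ⟨⟨u, v⟩, hw⟩
    apply Subtype.ext
    simp [Fin.tail_cons]

lemma cons_cons_one {k : ℕ} (a b : F) (u : Fin k → F) :
    (Fin.cons a (Fin.cons b u) : Fin (k+2) → F) 1 = b := by
  rw [← tail_zero (Fin.cons a (Fin.cons b u) : Fin (k+2) → F), Fin.tail_cons, Fin.cons_zero]

lemma fiber_zero (k : ℕ) (β : F) (hβ : β ≠ 0) :
    Nat.card {p : (Fin (k+2) → F) × (Fin (k+2) → F) // EqnA (k+2) β p ∧ p.1 0 = 0}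
      = Fintype.card F * cntA k (-β⁻¹) := by
  have e : {p : (Fin (k+2) → F) × (Fin (k+2) → F) // EqnA (k+2) β p ∧ p.1 0 = 0}
      ≃ F × {p : (Fin k → F) × (Fin k → F) // EqnA k (-β⁻¹) p} := by
    refine ⟨fun s => (s.1.2 0, ⟨(Fin.tail (Fin.tail s.1.1), Fin.tail (Fin.tail s.1.2)),
        ((eqnA_zero_iff k β hβ s.1.1 s.1.2 s.2.2).mp s.2.1).2.2⟩),
      fun cw => ⟨(Fin.cons 0 (Fin.cons (-β⁻¹) cw.2.1.1),
        Fin.cons cw.1 (Fin.cons (-β) cw.2.1.2)), ?_, ?_⟩, ?_, ?_⟩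
    · refine (eqnA_zero_iff k β hβ _ _ (by simp)).mpr ⟨?_, ?_, ?_⟩
    
      · exact cons_cons_one _ _ _
      · exact cons_cons_one _ _ _
      · simp only [Fin.tail_cons]
        exact cw.2.2
    · simp
    · rintro ⟨⟨x, y⟩, hE, h0⟩
      have h0' : x 0 = 0 := h0
      obtain ⟨hx1, hy1, _⟩ := (eqnA_zero_iff k β hβ x y h0').mp hE
      apply Subtype.ext
      have hx : Fin.cons 0 (Fin.cons (-β⁻¹) (Fin.tail (Fin.tail x))) = x := by
        rw [← h0', ← hx1, ← tail_zero x, Fin.cons_self_tail, Fin.cons_self_tail]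
      have hy : Fin.cons (y 0) (Fin.cons (-β) (Fin.tail (Fin.tail y))) = y := by
        rw [← hy1, ← tail_zero y, Fin.cons_self_tail, Fin.cons_self_tail]
      exact Prod.ext hx hy
    · rintro ⟨c, ⟨⟨u, v⟩, hw⟩⟩
      simp [Fin.tail_cons]
  rw [Nat.card_congr e, Nat.card_prod, Nat.card_eq_fintype_card, cntA]

lemma cntA_rec (k : ℕ) (β : F) (hβ : β ≠ 0) :
    cntA (k+2) β = Fintype.card F * cntA k (-β⁻¹)
      + ∑ t ∈ Finset.univ.erase (0 : F), cntA (k+1) t := by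
  have hcard : ∀ (t : F),
      (Finset.univ.filter (fun p : (Fin (k+2) → F) × (Fin (k+2) → F) => EqnA (k+2) β p ∧ p.1 0 = t)).card
      = Nat.card {p : (Fin (k+2) → F) × (Fin (k+2) → F) // EqnA (k+2) β p ∧ p.1 0 = t} := by
    intro t
    rw [Nat.card_eq_fintype_card, Fintype.card_subtype]
  have h1 : cntA (k+2) β
      = ∑ t : F, (Finset.univ.filter
          (fun p : (Fin (k+2) → F) × (Fin (k+2) → F) => EqnA (k+2) β p ∧ p.1 0 = t)).card := by
    rw [cntA, Nat.card_eq_fintype_card, Fintype.card_subtype]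
    rw [Finset.card_eq_sum_card_fiberwise
      (f := fun p : (Fin (k+2) → F) × (Fin (k+2) → F) => p.1 0) (t := Finset.univ)
      (fun p _ => Finset.mem_univ _)]
    apply Finset.sum_congr rfl
    intro t _
    rw [Finset.filter_filter]
  rw [h1, ← Finset.add_sum_erase _ _ (Finset.mem_univ (0 : F)), hcard, fiber_zero k β hβ]
  congr 1
  apply Finset.sum_congr rfl
  intro t htmem
  rw [hcard, fiber_ne (k+1) β t (Finset.ne_of_mem_erase htmem)]

lemma neg_inv_eq_iff (β : F) (hβ : β ≠ 0) (m : ℕ) :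
    -β⁻¹ = (-1:F)^(m+1) ↔ β = (-1:F)^(m+2) := by
  have hsq : (-1:F)^(m+1) * (-1:F)^(m+1) = 1 := by
    rw [← pow_add, ← two_mul, pow_mul, neg_one_sq, one_pow]
  constructor
  · intro h
    have hb : β * (-1:F)^(m+1) = -1 := by
      rw [← h, mul_neg, mul_inv_cancel₀ hβ]
    rw [pow_succ]
    linear_combination (-1:F)^(m+1) * hb - β * hsq
  · intro h
    rw [pow_succ] at h
    have hb : β * β = 1 := by rw [h]; linear_combination hsq
    have hinv : β⁻¹ = β := inv_eq_of_mul_eq_one_right hb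
    rw [hinv, h]
    ring

lemma main_formula (k : ℕ) : ∀ β : F, β ≠ 0 →
    (cntA k β : ℤ) * ((Fintype.card F : ℤ)^2 - 1) =
      if Even k then (Fintype.card F : ℤ)^(k+2) - 1
      else ((Fintype.card F : ℤ)^((k+1)/2) - 1) * ((Fintype.card F : ℤ)^((k+3)/2) - 1)
        + (if β = (-1 : F)^((k+1)/2)
            then ((Fintype.card F : ℤ)^2 - 1) * (Fintype.card F : ℤ)^((k+1)/2) else 0) := by
  induction k using Nat.strong_induction_on with
  | _ k ih =>
  have hq : 1 < Fintype.card F := Fintype.one_lt_card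
  rcases k with _ | _ | k
  · intro β hβ
    rw [if_pos (Even.zero), cntA_zero]
    push_cast
    ring
  · intro β hβ
    rw [if_neg (by simp), cntA_one]
    norm_num
    split_ifs with h
    · have h2 : 1 ≤ 2 * Fintype.card F := by omega
      push_cast [h2]
      ring
    · have h2 : 1 ≤ Fintype.card F := by omega
      push_cast [h2]
      ring
  intro β hβ
  have hβ' : -β⁻¹ ≠ 0 := by simp [hβ]
  have hcard_erase : (((Finset.univ : Finset F).erase 0).card : ℤ)
      = (Fintype.card F : ℤ) - 1 := by
    rw [Finset.card_erase_of_mem (Finset.mem_univ 0), Finset.card_univ,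
      Nat.cast_sub (by omega), Nat.cast_one]
  rw [cntA_rec k β hβ]
  push_cast
  rw [add_mul, mul_assoc, Finset.sum_mul]
  rcases Nat.even_or_odd k with he | ho
  · -- k even
    obtain ⟨m, hm⟩ := he
    subst hm
    have h_ih0 : (cntA (m+m) (-β⁻¹) : ℤ) * ((Fintype.card F : ℤ)^2 - 1)
        = (Fintype.card F : ℤ)^(m+m+2) - 1 := by
      have := ih (m+m) (by omega) (-β⁻¹) hβ'
      rwa [if_pos ⟨m, rfl⟩] at this
    have h_ih_t : ∀ t : F, t ≠ 0 → (cntA (m+m+1) t : ℤ) * ((Fintype.card F : ℤ)^2 - 1)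
        = ((Fintype.card F : ℤ)^(m+1) - 1) * ((Fintype.card F : ℤ)^(m+2) - 1)
          + (if t = (-1 : F)^(m+1)
              then ((Fintype.card F : ℤ)^2 - 1) * (Fintype.card F : ℤ)^(m+1) else 0) := by
      intro t ht
      have := ih (m+m+1) (by omega) t ht
      rwa [if_neg (by rintro ⟨r, hr⟩; omega),
        show (m+m+1+1)/2 = m+1 from by omega,
        show (m+m+1+3)/2 = m+2 from by omega] at this
    have hmem : (-1 : F)^(m+1) ∈ (Finset.univ : Finset F).erase 0 := by
      apply Finset.mem_erase_of_ne_of_mem _ (Finset.mem_univ _)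
      exact pow_ne_zero _ (by simp)
    have hsum : ∑ t ∈ (Finset.univ : Finset F).erase 0,
        (cntA (m+m+1) t : ℤ) * ((Fintype.card F : ℤ)^2 - 1)
        = ((Fintype.card F : ℤ) - 1) *
            (((Fintype.card F : ℤ)^(m+1) - 1) * ((Fintype.card F : ℤ)^(m+2) - 1))
          + ((Fintype.card F : ℤ)^2 - 1) * (Fintype.card F : ℤ)^(m+1) := by
      rw [Finset.sum_congr rfl (fun t ht => h_ih_t t (Finset.ne_of_mem_erase ht))]
      rw [Finset.sum_add_distrib, Finset.sum_const, Finset.sum_ite_eq' _ ((-1 : F)^(m+1)),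
        if_pos hmem, nsmul_eq_mul, hcard_erase]
    rw [hsum, h_ih0, if_pos (by exact ⟨m+1, by omega⟩)]
    ring
  · -- k odd
    obtain ⟨m, hm⟩ := ho
    subst hm
    have h_ih0 : (cntA (2*m+1) (-β⁻¹) : ℤ) * ((Fintype.card F : ℤ)^2 - 1)
        = ((Fintype.card F : ℤ)^(m+1) - 1) * ((Fintype.card F : ℤ)^(m+2) - 1)
          + (if β = (-1 : F)^(m+2)
              then ((Fintype.card F : ℤ)^2 - 1) * (Fintype.card F : ℤ)^(m+1) else 0) := by
      have := ih (2*m+1) (by omega) (-β⁻¹) hβ'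
      rwa [if_neg (by rintro ⟨r, hr⟩; omega),
        show (2*m+1+1)/2 = m+1 from by omega,
        show (2*m+1+3)/2 = m+2 from by omega,
        if_congr (neg_inv_eq_iff β hβ m) rfl rfl] at this
    have h_ih_t : ∀ t : F, t ≠ 0 → (cntA (2*m+1+1) t : ℤ) * ((Fintype.card F : ℤ)^2 - 1)
        = (Fintype.card F : ℤ)^(2*m+1+1+2) - 1 := by
      intro t ht
      have := ih (2*m+1+1) (by omega) t ht
      rwa [if_pos ⟨m+1, by omega⟩] at this
    have hsum : ∑ t ∈ (Finset.univ : Finset F).erase 0,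
        (cntA (2*m+1+1) t : ℤ) * ((Fintype.card F : ℤ)^2 - 1)
        = ((Fintype.card F : ℤ) - 1) * ((Fintype.card F : ℤ)^(2*m+1+1+2) - 1) := by
      rw [Finset.sum_congr rfl (fun t ht => h_ih_t t (Finset.ne_of_mem_erase ht))]
      rw [Finset.sum_const, nsmul_eq_mul, hcard_erase]
    rw [hsum, h_ih0, if_neg (by rintro ⟨r, hr⟩; omega : ¬ Even (2*m+1+2)),
      show (2*m+1+2+1)/2 = m+2 from by omega,
      show (2*m+1+2+3)/2 = m+3 from by omega]
    split_ifs with hcond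
    · ring
    · ring

end TypeA

/-- For odd `n` and a fixed generic parameter `α` (`α ≠ 0` and
`α ≠ (-1)^{(n+1)/2}`), the number of `F_q`-points of the generic variety of
type `A_n` is `(q^{(n+1)/2} - 1)(q^{(n+3)/2} - 1)/(q^2 - 1)`. -/
theorem card_typeA_odd_generic (F : Type) [Field F] [Fintype F] (n : ℕ)
    (hn : Odd n) (α : F) (h0 : α ≠ 0) (h1 : α ≠ (-1 : F) ^ ((n + 1) / 2)) :
    Nat.card {p : (Fin n → F) × (Fin n → F) //
        ∀ i : Fin n, p.1 i * p.2 i =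
          1 + (if i.val = 0 then α else 1) *
            ∏ j ∈ Finset.univ.filter (fun j => (SimpleGraph.pathGraph n).Adj i j), p.1 j}
      * (Fintype.card F ^ 2 - 1)
      = (Fintype.card F ^ ((n + 1) / 2) - 1) * (Fintype.card F ^ ((n + 3) / 2) - 1) := by
  have hq : 0 < Fintype.card F := Fintype.card_pos
  have hrw : Nat.card {p : (Fin n → F) × (Fin n → F) //
      ∀ i : Fin n, p.1 i * p.2 i =
        1 + (if i.val = 0 then α else 1) *
          ∏ j ∈ Finset.univ.filter (fun j => (SimpleGraph.pathGraph n).Adj i j), p.1 j}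
      = cntA n α := by
    apply Nat.card_congr
    apply Equiv.subtypeEquivRight
    intro p
    apply forall_congr'
    intro i
    rw [prod_nbr_eq]
  rw [hrw]
  have key := main_formula n α h0
  rw [if_neg (Nat.not_even_iff_odd.mpr hn), if_neg h1, add_zero] at key
  have e1 : 1 ≤ Fintype.card F ^ 2 := Nat.one_le_pow _ _ hq
  have e2 : 1 ≤ Fintype.card F ^ ((n+1)/2) := Nat.one_le_pow _ _ hq
  have e3 : 1 ≤ Fintype.card F ^ ((n+3)/2) := Nat.one_le_pow _ _ hq
  zify [e1, e2, e3]
  push_cast at key ⊢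
  exact key
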